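/- For every integer r ≥ 1 and every nonnegative integer m, the poly-Bernoulli polynomial satisfies B_m^{(r)}(y) = sum over n from 0 to m of 1/(n+1)^r * sum over k from 0 to n of binomial(n,k) * (-1)^k * (y - k)^m, for all real (or complex) y. -/

import Mathlib

open Finset

/-- Stirling numbers of the second kind, via the standard recurrence. -/
def stirling2 : ℕ → ℕ → ℕ
  | 0, 0 => 1
  | 0, _ + 1 => 0
  | _ + 1, 0 => 0
  | m + 1, n + 1 => (n + 1) * stirling2 m (n + 1) + stirling2 m n

/-- Poly-Bernoulli numbers `B_j^{(r)}`. -/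
def polyBernoulli (r j : ℕ) : ℚ :=
  (-1) ^ j * ∑ i ∈ Finset.range (j + 1),
    (stirling2 j i : ℚ) * (i.factorial : ℚ) * (-1) ^ i / ((i : ℚ) + 1) ^ r

/-- Poly-Bernoulli polynomials `B_m^{(r)}(y)`. -/
noncomputable def polyBernoulliPoly (r m : ℕ) (y : ℝ) : ℝ :=
  ∑ j ∈ Finset.range (m + 1), (m.choose j : ℝ) * y ^ (m - j) * (polyBernoulli r j : ℝ)

lemma stirling2_eq_zero : ∀ {j n : ℕ}, j < n → stirling2 j n = 0 := by
  intro j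
  induction j with
  | zero => intro n hn; match n, hn with | n + 1, _ => rfl
  | succ j IH =>
    intro n hn
    match n, hn with
    | n + 1, hn =>
      have h1 : j < n + 1 := by omega
      have h2 : j < n := by omega
      show (n + 1) * stirling2 j (n + 1) + stirling2 j n = 0
      rw [IH h1, IH h2]; simp

lemma stirling2_binom : ∀ (j n : ℕ),
    stirling2 (j + 1) (n + 1) = ∑ i ∈ range (j + 1), j.choose i * stirling2 i n := by
  intro j
  induction j with
  | zero =>
    intro n
    show (n + 1) * stirling2 0 (n + 1) + stirling2 0 n = _
    cases n with
    | zero => rfl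
    | succ n => simp [stirling2]
  | succ j IH =>
    intro n
    have expand : ∑ i ∈ range (j + 2), (j + 1).choose i * stirling2 i n
        = (∑ i ∈ range (j + 1), j.choose i * stirling2 (i + 1) n)
          + ∑ i ∈ range (j + 1), j.choose i * stirling2 i n := by
      rw [Finset.sum_range_succ' (fun i => (j + 1).choose i * stirling2 i n) (j + 1)]
      have hpas : ∀ i, (j + 1).choose (i + 1) = j.choose i + j.choose (i + 1) :=
        fun i => Nat.choose_succ_succ j i
      simp only [hpas, add_mul, Finset.sum_add_distrib]
      have h2 : (∑ i ∈ range (j + 1), j.choose (i + 1) * stirling2 (i + 1) n)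
            + (j + 1).choose 0 * stirling2 0 n
          = ∑ i ∈ range (j + 1), j.choose i * stirling2 i n := by
        have h3 := Finset.sum_range_succ' (fun i => j.choose i * stirling2 i n) (j + 1)
        rw [Finset.sum_range_succ (fun i => j.choose i * stirling2 i n) (j + 1)] at h3
        simp only [Nat.choose_succ_self, Nat.zero_mul, Nat.add_zero, Nat.choose_zero_right] at h3 ⊢
        omega
      omega
    rw [expand]
    cases n with
    | zero =>
      have hz : ∀ i, stirling2 (i + 1) 0 = 0 := fun i => rfl
      simp only [hz, Nat.mul_zero, Finset.sum_const_zero, zero_add]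
      show 1 * stirling2 (j + 1) 1 + stirling2 (j + 1) 0 = _
      rw [IH 0]
      simp [stirling2]
    | succ n =>
      have hs : ∀ i, stirling2 (i + 1) (n + 1)
          = (n + 1) * stirling2 i (n + 1) + stirling2 i n := fun i => rfl
      simp only [hs, Nat.mul_add, Finset.sum_add_distrib]
      rw [show (∑ i ∈ range (j+1), j.choose i * ((n+1) * stirling2 i (n+1))) =
        (n+1) * ∑ i ∈ range (j+1), j.choose i * stirling2 i (n+1) by
          rw [Finset.mul_sum]; apply Finset.sum_congr rfl; intros; ring]
      rw [← IH n, ← IH (n + 1)]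
      show (n + 1 + 1) * stirling2 (j + 1) (n + 1 + 1) + stirling2 (j + 1) (n + 1) = _
      ring

lemma alt_sum_pow : ∀ (j n : ℕ),
    ∑ k ∈ range (n + 1), (n.choose k : ℝ) * (-1) ^ k * (k : ℝ) ^ j
      = (-1) ^ n * (n.factorial : ℝ) * (stirling2 j n : ℝ) := by
  intro j
  induction j using Nat.strong_induction_on with
  | _ j IH =>
    match j with
    | 0 =>
      intro n
      have halt := Int.alternating_sum_range_choose (n := n)
      have hcast : ∑ k ∈ range (n + 1), (n.choose k : ℝ) * (-1) ^ k * (k : ℝ) ^ 0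
          = ((∑ m ∈ range (n + 1), (-1) ^ m * (n.choose m : ℤ) : ℤ) : ℝ) := by
        push_cast; apply Finset.sum_congr rfl; intros; ring
      rw [hcast, halt]
      cases n with
      | zero => simp [stirling2]
      | succ n => simp [stirling2, stirling2_eq_zero (Nat.succ_pos n)]
    | j + 1 =>
      intro n
      cases n with
      | zero => simp [stirling2]
      | succ n =>
        have key : ∀ k : ℕ, ((n + 1).choose (k + 1) : ℝ) * ((k : ℝ) + 1)
            = ((n : ℝ) + 1) * (n.choose k : ℝ) := by
          intro k
          have h := Nat.add_one_mul_choose_eq n k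
          have h2 : ((n.succ * n.choose k : ℕ) : ℝ) = ((n.succ.choose k.succ * k.succ : ℕ) : ℝ) :=
            by rw [h]
          push_cast at h2
          linarith
        calc ∑ k ∈ range (n + 1 + 1), ((n + 1).choose k : ℝ) * (-1) ^ k * (k : ℝ) ^ (j + 1)
            = ∑ k ∈ range (n + 1),
                ((n + 1).choose (k + 1) : ℝ) * (-1) ^ (k + 1) * ((k : ℝ) + 1) ^ (j + 1) := by
              rw [Finset.sum_range_succ'
                (fun k => ((n + 1).choose k : ℝ) * (-1) ^ k * (k : ℝ) ^ (j + 1)) (n + 1)]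
              simp [zero_pow (Nat.succ_ne_zero j)]
          _ = ∑ k ∈ range (n + 1), (-((n : ℝ) + 1)) * ((n.choose k : ℝ) * (-1) ^ k)
                * ((k : ℝ) + 1) ^ j := by
              apply Finset.sum_congr rfl; intro k _
              have he : ((k : ℝ) + 1) ^ (j + 1) = ((k : ℝ) + 1) ^ j * ((k : ℝ) + 1) := by ring
              rw [he, pow_succ]
              linear_combination (-(-1 : ℝ) ^ k * ((k : ℝ) + 1) ^ j) * key k
          _ = ∑ k ∈ range (n + 1), ∑ i ∈ range (j + 1),
                (-((n : ℝ) + 1)) * ((n.choose k : ℝ) * (-1) ^ k)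
                  * ((k : ℝ) ^ i * (j.choose i : ℝ)) := by
              apply Finset.sum_congr rfl; intro k _
              have hb : ((k : ℝ) + 1) ^ j
                  = ∑ i ∈ range (j + 1), (k : ℝ) ^ i * (j.choose i : ℝ) := by
                rw [add_pow]; simp
              rw [hb, Finset.mul_sum]
          _ = (-((n : ℝ) + 1)) * ∑ i ∈ range (j + 1), (j.choose i : ℝ) *
                ∑ k ∈ range (n + 1), (n.choose k : ℝ) * (-1) ^ k * (k : ℝ) ^ i := by
              rw [Finset.sum_comm, Finset.mul_sum]
              apply Finset.sum_congr rfl; intro i _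
              rw [Finset.mul_sum, Finset.mul_sum]
              apply Finset.sum_congr rfl; intro k _
              ring
          _ = (-((n : ℝ) + 1)) * ∑ i ∈ range (j + 1), (j.choose i : ℝ) *
                ((-1) ^ n * (n.factorial : ℝ) * (stirling2 i n : ℝ)) := by
              congr 1
              apply Finset.sum_congr rfl; intro i hi
              rw [IH i (by simp at hi; omega) n]
          _ = (-1) ^ (n + 1) * ((n + 1).factorial : ℝ) * (stirling2 (j + 1) (n + 1) : ℝ) := by
              rw [stirling2_binom j n]
              push_cast [Nat.factorial_succ, Finset.mul_sum]
              apply Finset.sum_congr rfl; intro i _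
              ring

theorem polyBernoulliPoly_binomial_sum (r : ℕ) (hr : 1 ≤ r) (m : ℕ) (y : ℝ) :
    polyBernoulliPoly r m y
      = ∑ n ∈ Finset.range (m + 1), (1 / ((n : ℝ) + 1) ^ r) *
          ∑ k ∈ Finset.range (n + 1), (n.choose k : ℝ) * (-1) ^ k * (y - k) ^ m := by
  have expand : ∀ k : ℕ, (y - (k : ℝ)) ^ m
      = ∑ j ∈ range (m + 1), (-(k : ℝ)) ^ j * y ^ (m - j) * (m.choose j : ℝ) := by
    intro k
    rw [show y - (k : ℝ) = -(k : ℝ) + y by ring, add_pow]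
  calc polyBernoulliPoly r m y
      = ∑ j ∈ range (m + 1), ∑ n ∈ range (m + 1),
          (m.choose j : ℝ) * y ^ (m - j) * (-1) ^ j *
            ((stirling2 j n : ℝ) * (n.factorial : ℝ) * (-1) ^ n / ((n : ℝ) + 1) ^ r) := by
        unfold polyBernoulliPoly polyBernoulli
        apply Finset.sum_congr rfl; intro j hj
        simp only [Finset.mem_range] at hj
        have htrunc : ∑ n ∈ range (j + 1), (stirling2 j n : ℝ) * (n.factorial : ℝ) * (-1) ^ n
              / ((n : ℝ) + 1) ^ r
            = ∑ n ∈ range (m + 1), (stirling2 j n : ℝ) * (n.factorial : ℝ) * (-1) ^ n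
              / ((n : ℝ) + 1) ^ r := by
          apply Finset.sum_subset
          · intro x hx; simp only [Finset.mem_range] at *; omega
          · intro x _ hx
            simp only [Finset.mem_range] at hx
            rw [stirling2_eq_zero (by omega : j < x)]
            simp
        push_cast
        rw [htrunc, Finset.mul_sum, Finset.mul_sum]
        apply Finset.sum_congr rfl; intro n _
        ring
    _ = ∑ n ∈ range (m + 1), (1 / ((n : ℝ) + 1) ^ r) *
          ∑ j ∈ range (m + 1), (m.choose j : ℝ) * y ^ (m - j) * (-1) ^ j *
            ((-1) ^ n * (n.factorial : ℝ) * (stirling2 j n : ℝ)) := by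
        rw [Finset.sum_comm]
        apply Finset.sum_congr rfl; intro n _
        rw [Finset.mul_sum]
        apply Finset.sum_congr rfl; intro j _
        ring
    _ = ∑ n ∈ range (m + 1), (1 / ((n : ℝ) + 1) ^ r) *
          ∑ k ∈ range (n + 1), (n.choose k : ℝ) * (-1) ^ k * (y - k) ^ m := by
        apply Finset.sum_congr rfl; intro n _
        congr 1
        calc ∑ j ∈ range (m + 1), (m.choose j : ℝ) * y ^ (m - j) * (-1) ^ j *
              ((-1) ^ n * (n.factorial : ℝ) * (stirling2 j n : ℝ))
            = ∑ j ∈ range (m + 1), ∑ k ∈ range (n + 1),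
                (m.choose j : ℝ) * y ^ (m - j) * (-1) ^ j *
                  ((n.choose k : ℝ) * (-1) ^ k * (k : ℝ) ^ j) := by
              apply Finset.sum_congr rfl; intro j _
              rw [← Finset.mul_sum, alt_sum_pow j n]
          _ = ∑ k ∈ range (n + 1), (n.choose k : ℝ) * (-1) ^ k * (y - k) ^ m := by
              rw [Finset.sum_comm]
              apply Finset.sum_congr rfl; intro k _
              rw [expand k, Finset.mul_sum]
              apply Finset.sum_congr rfl; intro j _
              rw [show (-(k : ℝ)) ^ j = (-1) ^ j * (k : ℝ) ^ j by rw [neg_pow]]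
              ring
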